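/- Let {x^k} be generated by the Newton-type proximal gradient method: x^{k+1} = x^k + α_k d^k, where d^k is the unique global minimizer of d ↦ Q(x^k,d), t^k = Q(x^k,d^k), and α_k is the largest element of {1, r, r², …} (r ∈ (0,1)) satisfying F_j(x^k + α_k d^k) ≤ F_j(x^k) + β α_k t^k for all j = 1,…,m, with β ∈ (0,1). Suppose each f_j is σ-strongly convex (σ > 0), each ∇f_j is Lipschitz continuous with constant L, and the level set M = {x ∈ ℝⁿ : F_j(x) ≤ F_j(x^0) for all j} is bounded. Then every accumulation point of {x^k} is a critical point of the multi-objective problem min (F_1,…,F_m). -/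

import Mathlib

open Filter Topology Finset
open scoped RealInnerProductSpace

noncomputable section

/-- One-sided directional derivative: `c = F'(x; d) = lim_{α→0⁺} (F(x+αd) − F(x))/α`. -/
def HasDirDeriv {n : ℕ} (F : EuclideanSpace ℝ (Fin n) → ℝ)
    (x d : EuclideanSpace ℝ (Fin n)) (c : ℝ) : Prop :=
  Filter.Tendsto (fun α : ℝ => (F (x + α • d) - F x) / α) (nhdsWithin 0 (Set.Ioi 0)) (nhds c)

/-- Subdifferential of a convex function: `∂h(x) = {ξ : h(y) ≥ h(x) + ⟪ξ, y − x⟫ ∀ y}`. -/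
def subdiff {n : ℕ} (h : EuclideanSpace ℝ (Fin n) → ℝ) (x : EuclideanSpace ℝ (Fin n)) :
    Set (EuclideanSpace ℝ (Fin n)) :=
  {ξ | ∀ y, h x + ⟪ξ, y - x⟫ ≤ h y}

/-- `σ`-strong convexity: `f(αx+(1−α)y) ≤ αf(x)+(1−α)f(y) − (σ/2)α(1−α)‖x−y‖²`. -/
def StronglyConvexFun {n : ℕ} (σ : ℝ) (f : EuclideanSpace ℝ (Fin n) → ℝ) : Prop :=
  ∀ x y : EuclideanSpace ℝ (Fin n), ∀ α : ℝ, 0 ≤ α → α ≤ 1 →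
    f (α • x + (1 - α) • y) ≤ α * f x + (1 - α) * f y - σ / 2 * α * (1 - α) * ‖x - y‖ ^ 2

/-- `Q_j(x,d) = ∇f_j(x)ᵀd + ½ dᵀ∇²f_j(x)d + g_j(x+d) − g_j(x)`, where the Hessian is
the Fréchet derivative of the gradient. -/
def Qj {n m : ℕ} (f g : Fin (m + 1) → EuclideanSpace ℝ (Fin n) → ℝ)
    (j : Fin (m + 1)) (x d : EuclideanSpace ℝ (Fin n)) : ℝ :=
  ⟪gradient (f j) x, d⟫ + (1 / 2) * ⟪(fderiv ℝ (gradient (f j)) x) d, d⟫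
    + g j (x + d) - g j x

/-- `Q(x,d) = max_{1 ≤ j ≤ m} Q_j(x,d)`. -/
def Qmax {n m : ℕ} (f g : Fin (m + 1) → EuclideanSpace ℝ (Fin n) → ℝ)
    (x d : EuclideanSpace ℝ (Fin n)) : ℝ :=
  Finset.univ.sup' Finset.univ_nonempty (fun j => Qj f g j x d)

section Helpers

variable {n : ℕ}
local notation "E" => EuclideanSpace ℝ (Fin n)

lemma grad_inner' {f : E → ℝ} {y : E} (d : E) :
    ⟪gradient f y, d⟫ = fderiv ℝ f y d := by
  rw [gradient, InnerProductSpace.toDual_symm_apply]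

lemma lineDerivAt' {f : E → ℝ} (hf : Differentiable ℝ f) (x d : E) (t : ℝ) :
    HasDerivAt (fun s : ℝ => f (x + s • d)) ⟪gradient f (x + t • d), d⟫ t := by
  have hline : HasDerivAt (fun s : ℝ => x + s • d) d t := by
    simpa using ((hasDerivAt_id t).smul_const d).const_add x
  have := (hf (x + t • d)).hasFDerivAt.comp_hasDerivAt t hline
  rw [grad_inner' d]; exact this

lemma slope_tendsto' {f : E → ℝ} (hf : Differentiable ℝ f) (x d : E) :
    Tendsto (fun s : ℝ => (f (x + s • d) - f x) / s) (nhdsWithin 0 (Set.Ioi 0))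
      (nhds ⟪gradient f x, d⟫) := by
  have h := (lineDerivAt' hf x d 0)
  rw [hasDerivAt_iff_tendsto_slope] at h
  have h2 : Tendsto (slope (fun s : ℝ => f (x + s • d)) 0) (nhdsWithin 0 (Set.Ioi 0))
      (nhds ⟪gradient f (x + (0:ℝ) • d), d⟫) :=
    h.mono_left (nhdsWithin_mono 0 (fun s hs => ne_of_gt hs))
  simp only [zero_smul, add_zero] at h2
  refine h2.congr (fun s => ?_)
  simp [slope_def_field, div_eq_inv_mul]

lemma gradC1 {f : E → ℝ} (hf : ContDiff ℝ 2 f) : ContDiff ℝ 1 (gradient f) := by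
  have h1 : ContDiff ℝ 1 (fderiv ℝ f) := hf.fderiv_right (le_refl _)
  have h2 : ContDiff ℝ 1 (fun y : StrongDual ℝ E =>
      (InnerProductSpace.toDual ℝ E).symm y) :=
    (InnerProductSpace.toDual ℝ E).symm.contDiff
  exact h2.comp h1

lemma gradslope_tendsto' {f : E → ℝ} (hf : ContDiff ℝ 2 f) (x d : E) :
    Tendsto (fun t : ℝ => t⁻¹ • (gradient f (x + t • d) - gradient f x))
      (nhdsWithin 0 (Set.Ioi 0)) (nhds ((fderiv ℝ (gradient f) x) d)) := by
  have hg : Differentiable ℝ (gradient f) := (gradC1 hf).differentiable (by norm_num)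
  have hline : HasDerivAt (fun s : ℝ => x + s • d) d 0 := by
    simpa using ((hasDerivAt_id (0:ℝ)).smul_const d).const_add x
  have h : HasDerivAt (fun s : ℝ => gradient f (x + s • d)) ((fderiv ℝ (gradient f) x) d) 0 := by
    have hx : HasFDerivAt (gradient f) (fderiv ℝ (gradient f) x) (x + (0:ℝ) • d) := by
      simpa using (hg x).hasFDerivAt
    exact hx.comp_hasDerivAt 0 hline
  rw [hasDerivAt_iff_tendsto_slope] at h
  have h2 := h.mono_left (nhdsWithin_mono 0 (fun s (hs : s ∈ Set.Ioi (0:ℝ)) => ne_of_gt hs))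
  refine h2.congr (fun s => ?_)
  simp [slope_def_module]

lemma subgrad' {σ : ℝ} {f : E → ℝ} (hf : ContDiff ℝ 2 f) (hsc : StronglyConvexFun σ f)
    (x y : E) : ⟪gradient f x, y - x⟫ ≤ f y - f x - σ / 2 * ‖y - x‖ ^ 2 := by
  have hdiff : Differentiable ℝ f := hf.differentiable (by norm_num)
  have key : ∀ α : ℝ, α ∈ Set.Ioo (0:ℝ) 1 →
      (f (x + α • (y - x)) - f x) / α ≤ f y - f x - σ / 2 * (1 - α) * ‖y - x‖ ^ 2 := by
    intro α hα
    have h := hsc y x α (le_of_lt hα.1) (le_of_lt hα.2)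
    have heq : α • y + (1 - α) • x = x + α • (y - x) := by module
    rw [heq] at h
    rw [div_le_iff₀ hα.1]
    have hn : ‖y - x‖ = ‖x - y‖ := by rw [norm_sub_rev]
    nlinarith [h, hα.1]
  have h1 : Tendsto (fun α : ℝ => (f (x + α • (y - x)) - f x) / α)
      (nhdsWithin 0 (Set.Ioi 0)) (nhds ⟪gradient f x, y - x⟫) := slope_tendsto' hdiff x (y - x)
  have h2 : Tendsto (fun α : ℝ => f y - f x - σ / 2 * (1 - α) * ‖y - x‖ ^ 2)
      (nhdsWithin 0 (Set.Ioi 0)) (nhds (f y - f x - σ / 2 * ‖y - x‖ ^ 2)) := by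
    have : ContinuousAt (fun α : ℝ => f y - f x - σ / 2 * (1 - α) * ‖y - x‖ ^ 2) 0 := by
      fun_prop
    simpa using this.continuousWithinAt.tendsto
  refine le_of_tendsto_of_tendsto h1 h2 ?_
  filter_upwards [Ioo_mem_nhdsGT_of_mem (by norm_num : (0:ℝ) ∈ Set.Ico (0:ℝ) 1)] with α hα
  exact key α hα

lemma strongmono' {σ : ℝ} {f : E → ℝ} (hf : ContDiff ℝ 2 f) (hsc : StronglyConvexFun σ f)
    (x y : E) : σ * ‖y - x‖ ^ 2 ≤ ⟪gradient f y - gradient f x, y - x⟫ := by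
  have h1 := subgrad' hf hsc x y
  have h2 := subgrad' hf hsc y x
  have h3 : ⟪gradient f y - gradient f x, y - x⟫
      = ⟪gradient f y, y - x⟫ - ⟪gradient f x, y - x⟫ := by rw [inner_sub_left]
  have h4 : ⟪gradient f y, x - y⟫ = -⟪gradient f y, y - x⟫ := by
    rw [← inner_neg_right]; congr 1; abel
  have hn : ‖x - y‖ = ‖y - x‖ := norm_sub_rev _ _
  rw [h4, hn] at h2
  nlinarith [h1, h2, h3]

lemma hess_lower' {σ : ℝ} {f : E → ℝ} (hf : ContDiff ℝ 2 f) (hsc : StronglyConvexFun σ f)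
    (x d : E) : σ * ‖d‖ ^ 2 ≤ ⟪(fderiv ℝ (gradient f) x) d, d⟫ := by
  have hmono := strongmono' hf hsc
  have h1 : Tendsto (fun t : ℝ => ⟪t⁻¹ • (gradient f (x + t • d) - gradient f x), d⟫)
      (nhdsWithin 0 (Set.Ioi 0)) (nhds ⟪(fderiv ℝ (gradient f) x) d, d⟫) :=
    ((continuous_inner.comp (continuous_id.prodMk continuous_const)).tendsto _).comp
      (gradslope_tendsto' hf x d)
  refine ge_of_tendsto h1 ?_
  filter_upwards [self_mem_nhdsWithin] with t ht
  have ht0 : (0:ℝ) < t := ht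
  have h2 := hmono x (x + t • d)
  have he : x + t • d - x = t • d := by abel
  rw [he] at h2
  rw [real_inner_smul_left]
  have h3 : ⟪gradient f (x + t • d) - gradient f x, t • d⟫
      = t * ⟪gradient f (x + t • d) - gradient f x, d⟫ := real_inner_smul_right _ _ _
  have h4 : ‖t • d‖ ^ 2 = t ^ 2 * ‖d‖ ^ 2 := by
    rw [norm_smul]; simp [mul_pow, abs_of_pos ht0, Real.norm_eq_abs]
  rw [h3, h4] at h2
  rw [le_inv_mul_iff₀ ht0]
  nlinarith [h2, ht0]

lemma hess_upper' {L : ℝ} {f : E → ℝ} (hf : ContDiff ℝ 2 f)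
    (hLip : ∀ y z : E, ‖gradient f y - gradient f z‖ ≤ L * ‖y - z‖)
    (x d : E) : ⟪(fderiv ℝ (gradient f) x) d, d⟫ ≤ L * ‖d‖ ^ 2 := by
  have h1 : Tendsto (fun t : ℝ => ⟪t⁻¹ • (gradient f (x + t • d) - gradient f x), d⟫)
      (nhdsWithin 0 (Set.Ioi 0)) (nhds ⟪(fderiv ℝ (gradient f) x) d, d⟫) :=
    ((continuous_inner.comp (continuous_id.prodMk continuous_const)).tendsto _).comp
      (gradslope_tendsto' hf x d)
  refine le_of_tendsto h1 ?_
  filter_upwards [self_mem_nhdsWithin] with t ht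
  have ht0 : (0:ℝ) < t := ht
  have h2 : ⟪gradient f (x + t • d) - gradient f x, d⟫
      ≤ ‖gradient f (x + t • d) - gradient f x‖ * ‖d‖ := real_inner_le_norm _ _
  have h3 : ‖gradient f (x + t • d) - gradient f x‖ ≤ L * ‖t • d‖ := by
    have := hLip (x + t • d) x
    simpa [add_sub_cancel_left] using this
  have h4 : ‖t • d‖ = t * ‖d‖ := by
    rw [norm_smul]; simp [abs_of_pos ht0, Real.norm_eq_abs]
  rw [real_inner_smul_left, inv_mul_le_iff₀ ht0]
  calc ⟪gradient f (x + t • d) - gradient f x, d⟫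
      ≤ ‖gradient f (x + t • d) - gradient f x‖ * ‖d‖ := h2
    _ ≤ L * ‖t • d‖ * ‖d‖ := by nlinarith [norm_nonneg d, h3]
    _ = t * (L * ‖d‖ ^ 2) := by rw [h4]; ring

lemma descent' {L : ℝ} {f : E → ℝ} (hf : ContDiff ℝ 2 f) (hL : 0 < L)
    (hLip : ∀ y z : E, ‖gradient f y - gradient f z‖ ≤ L * ‖y - z‖)
    (x d : E) {s : ℝ} (hs : 0 < s) :
    f (x + s • d) ≤ f x + s * ⟪gradient f x, d⟫ + L * s ^ 2 * ‖d‖ ^ 2 := by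
  have hdiff : Differentiable ℝ f := hf.differentiable (by norm_num)
  set φ : ℝ → ℝ := fun t => f (x + t • d) - t * ⟪gradient f x, d⟫ with hφ
  have hder : ∀ t ∈ Set.Icc (0:ℝ) s, HasDerivWithinAt φ
      (⟪gradient f (x + t • d), d⟫ - ⟪gradient f x, d⟫) (Set.Icc 0 s) t := by
    intro t _
    exact ((lineDerivAt' hdiff x d t).sub ((hasDerivAt_id t).mul_const _)|>.congr_deriv
      (by ring)).hasDerivWithinAt
  have hbound : ∀ t ∈ Set.Icc (0:ℝ) s,
      ‖⟪gradient f (x + t • d), d⟫ - ⟪gradient f x, d⟫‖ ≤ L * s * ‖d‖ ^ 2 := by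
    intro t ht
    have h1 : ⟪gradient f (x + t • d), d⟫ - ⟪gradient f x, d⟫
        = ⟪gradient f (x + t • d) - gradient f x, d⟫ := by rw [inner_sub_left]
    rw [h1, Real.norm_eq_abs]
    have h2 : |⟪gradient f (x + t • d) - gradient f x, d⟫|
        ≤ ‖gradient f (x + t • d) - gradient f x‖ * ‖d‖ := abs_real_inner_le_norm _ _
    have h3 : ‖gradient f (x + t • d) - gradient f x‖ ≤ L * (t * ‖d‖) := by
      have := hLip (x + t • d) x
      have he : x + t • d - x = t • d := by abel
      rw [he, norm_smul, Real.norm_eq_abs, abs_of_nonneg ht.1] at this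
      exact this
    calc |⟪gradient f (x + t • d) - gradient f x, d⟫|
        ≤ ‖gradient f (x + t • d) - gradient f x‖ * ‖d‖ := h2
      _ ≤ (L * (t * ‖d‖)) * ‖d‖ := by nlinarith [norm_nonneg d, h3]
      _ ≤ L * s * ‖d‖ ^ 2 := by
            nlinarith [mul_nonneg (mul_nonneg hL.le (sub_nonneg.2 ht.2)) (sq_nonneg ‖d‖)]
  have h4 : ‖φ s - φ 0‖ ≤ L * s * ‖d‖ ^ 2 * ‖s - 0‖ :=
    Convex.norm_image_sub_le_of_norm_hasDerivWithin_le hder hbound (convex_Icc 0 s)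
      (Set.left_mem_Icc.2 hs.le) (Set.right_mem_Icc.2 hs.le)
  rw [sub_zero] at h4
  rw [Real.norm_eq_abs, Real.norm_eq_abs, abs_of_pos hs] at h4
  have h5 : φ s - φ 0 ≤ L * s * ‖d‖ ^ 2 * s := (abs_le.1 h4).2
  simp only [hφ, zero_smul, add_zero, zero_mul, sub_zero] at h5
  nlinarith [h5]

lemma tendsto_finset_sup'' {α ι : Type*} [DecidableEq ι] {l : Filter α}
    (s : Finset ι) (hs : s.Nonempty) (u : ι → α → ℝ) (a : ι → ℝ)
    (h : ∀ j ∈ s, Tendsto (u j) l (nhds (a j))) :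
    Tendsto (fun x => s.sup' hs (fun j => u j x)) l (nhds (s.sup' hs a)) := by
  induction s using Finset.cons_induction with
  | empty => exact absurd hs (by simp)
  | cons j s hj ih =>
    rcases s.eq_empty_or_nonempty with rfl | hne
    · simpa using h j (by simp)
    · simp only [Finset.sup'_cons hne]
      exact (h j (by simp)).max (ih hne (fun i hi => h i (Finset.mem_cons_of_mem hi)))

end Helpers

set_option maxHeartbeats 2000000

/-- global convergence: let `x^{k+1} = x^k + α_k d^k`, where `d^k` is the
unique global minimizer of `d ↦ Q(x^k,d)`, `t^k = Q(x^k,d^k)`, and `α_k` is the largest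
element of `{1, r, r², …}` (`r ∈ (0,1)`) satisfying the Armijo condition
`F_j(x^k + α_k d^k) ≤ F_j(x^k) + β α_k t^k` for all `j` (`β ∈ (0,1)`). If each `f_j` is
`σ`-strongly convex, each `∇f_j` is `L`-Lipschitz, and the level set
`M = {x : F_j(x) ≤ F_j(x^0) ∀ j}` is bounded, then every accumulation point `x*` of `{x^k}`
is a critical point: `max_j F_j'(x*; d) ≥ 0` for every direction `d`. Here `F_j = f_j + g_j`. -/
theorem global_convergence_to_critical {n m : ℕ} (σ L : ℝ) (hσ : 0 < σ) (hL : 0 < L)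
    (r β : ℝ) (hr0 : 0 < r) (hr1 : r < 1) (hβ0 : 0 < β) (hβ1 : β < 1)
    (f g F : Fin (m + 1) → EuclideanSpace ℝ (Fin n) → ℝ)
    (hfsc : ∀ j, StronglyConvexFun σ (f j))
    (hfC2 : ∀ j, ContDiff ℝ 2 (f j))
    (hLip : ∀ j (y z : EuclideanSpace ℝ (Fin n)),
      ‖gradient (f j) y - gradient (f j) z‖ ≤ L * ‖y - z‖)
    (hgconv : ∀ j, ConvexOn ℝ Set.univ (g j))
    (hgcont : ∀ j, Continuous (g j))
    (hF : ∀ j y, F j y = f j y + g j y)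
    (xseq dseq : ℕ → EuclideanSpace ℝ (Fin n)) (tseq alphaseq : ℕ → ℝ)
    (hdmin : ∀ k d, Qmax f g (xseq k) (dseq k) ≤ Qmax f g (xseq k) d)
    (hduniq : ∀ k d, (∀ d', Qmax f g (xseq k) d ≤ Qmax f g (xseq k) d') → d = dseq k)
    (ht : ∀ k, tseq k = Qmax f g (xseq k) (dseq k))
    (halpha : ∀ k, ∃ N : ℕ, alphaseq k = r ^ N ∧
      (∀ j, F j (xseq k + alphaseq k • dseq k) ≤ F j (xseq k) + β * alphaseq k * tseq k) ∧
      (∀ i < N, ¬ ∀ j, F j (xseq k + r ^ i • dseq k) ≤ F j (xseq k) + β * r ^ i * tseq k))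
    (hupd : ∀ k, xseq (k + 1) = xseq k + alphaseq k • dseq k)
    (hlevel : Bornology.IsBounded {x : EuclideanSpace ℝ (Fin n) | ∀ j, F j x ≤ F j (xseq 0)})
    (F' : EuclideanSpace ℝ (Fin n) → Fin (m + 1) → EuclideanSpace ℝ (Fin n) → ℝ)
    (hF' : ∀ x j d, HasDirDeriv (F j) x d (F' x j d)) :
    ∀ xstar : EuclideanSpace ℝ (Fin n),
      (∃ φ : ℕ → ℕ, StrictMono φ ∧ Tendsto (xseq ∘ φ) atTop (nhds xstar)) →
      ∀ d : EuclideanSpace ℝ (Fin n),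
        0 ≤ Finset.univ.sup' Finset.univ_nonempty (fun j => F' xstar j d) := by
  intro xstar hacc
  obtain ⟨φ, hφmono, hφlim⟩ := hacc
  have hfd : ∀ j, Differentiable ℝ (f j) := fun j => (hfC2 j).differentiable (by norm_num)
  have hFc : ∀ j, Continuous (F j) := by
    intro j
    have hFe : F j = fun y => f j y + g j y := funext (hF j)
    rw [hFe]; exact (hfC2 j).continuous.add (hgcont j)
  -- Q vanishes at d = 0
  have hQ0 : ∀ x : EuclideanSpace ℝ (Fin n), Qmax f g x 0 = 0 := by
    intro x
    have he : (fun j : Fin (m+1) => Qj f g j x 0) = fun _ => (0:ℝ) := by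
      funext j; simp [Qj]
    rw [Qmax, he]
    exact Finset.sup'_const _ 0
  have htle : ∀ k, tseq k ≤ 0 := by
    intro k
    rw [ht k]
    calc Qmax f g (xseq k) (dseq k) ≤ Qmax f g (xseq k) 0 := hdmin k 0
      _ = 0 := hQ0 _
  -- strong convexity of Q in d
  have hQj_sc : ∀ (j : Fin (m+1)) x (d' : EuclideanSpace ℝ (Fin n)) (lam : ℝ),
      0 ≤ lam → lam ≤ 1 →
      Qj f g j x (lam • d') ≤ lam * Qj f g j x d' - σ/2 * lam * (1 - lam) * ‖d'‖^2 := by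
    intro j x d' lam h0 h1
    have hhl : σ * ‖d'‖^2 ≤ ⟪(fderiv ℝ (gradient (f j)) x) d', d'⟫ :=
      hess_lower' (hfC2 j) (hfsc j) x d'
    have hgc : g j (x + lam • d') ≤ lam * g j (x + d') + (1 - lam) * g j x := by
      have hb : (0:ℝ) ≤ 1 - lam := by linarith
      have hab : lam + (1 - lam) = 1 := by ring
      have h := (hgconv j).2 (Set.mem_univ (x + d')) (Set.mem_univ x) h0 hb hab
      have he : lam • (x + d') + (1 - lam) • x = x + lam • d' := by module
      rw [he] at h
      simpa [smul_eq_mul] using h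
    have hlin : ⟪gradient (f j) x, lam • d'⟫ = lam * ⟪gradient (f j) x, d'⟫ :=
      real_inner_smul_right _ _ _
    have hquad : ⟪(fderiv ℝ (gradient (f j)) x) (lam • d'), lam • d'⟫
        = lam^2 * ⟪(fderiv ℝ (gradient (f j)) x) d', d'⟫ := by
      rw [map_smul, real_inner_smul_left, real_inner_smul_right]; ring
    simp only [Qj, hlin, hquad]
    nlinarith [mul_nonneg (mul_nonneg h0 (sub_nonneg.2 h1)) (sub_nonneg.2 hhl), hgc]
  have hQsc : ∀ x (d' : EuclideanSpace ℝ (Fin n)) (lam : ℝ), 0 ≤ lam → lam ≤ 1 →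
      Qmax f g x (lam • d') ≤ lam * Qmax f g x d' - σ/2 * lam * (1 - lam) * ‖d'‖^2 := by
    intro x d' lam h0 h1
    rw [Qmax]
    refine Finset.sup'_le _ _ (fun j _ => ?_)
    have h2 := hQj_sc j x d' lam h0 h1
    have h3 : Qj f g j x d' ≤ Qmax f g x d' :=
      Finset.le_sup' (fun j => Qj f g j x d') (Finset.mem_univ j)
    nlinarith [h2, h3]
  -- t_k ≤ -(σ/2)‖d_k‖²
  have htneg : ∀ k, tseq k ≤ -(σ/2) * ‖dseq k‖^2 := by
    intro k
    have key : ∀ lam ∈ Set.Ioo (0:ℝ) 1, tseq k ≤ -(σ/2) * lam * ‖dseq k‖^2 := by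
      intro lam hlam
      have h1 : Qmax f g (xseq k) (dseq k) ≤ Qmax f g (xseq k) (lam • dseq k) := hdmin k _
      have h2 := hQsc (xseq k) (dseq k) lam hlam.1.le hlam.2.le
      rw [← ht k] at h1 h2
      have h3 := h1.trans h2
      nlinarith [h3, hlam.1, hlam.2]
    have hlim : Tendsto (fun lam : ℝ => -(σ/2) * lam * ‖dseq k‖^2)
        (nhdsWithin 1 (Set.Iio 1)) (nhds (-(σ/2) * ‖dseq k‖^2)) := by
      have hc : ContinuousAt (fun lam : ℝ => -(σ/2) * lam * ‖dseq k‖^2) 1 := by fun_prop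
      simpa using hc.continuousWithinAt.tendsto
    refine ge_of_tendsto hlim ?_
    filter_upwards [Ioo_mem_nhdsLT_of_mem (by norm_num : (1:ℝ) ∈ Set.Ioc (0:ℝ) 1)] with lam hlam
    exact key lam hlam
  -- descent estimate
  have hdesc : ∀ k (j : Fin (m+1)) (s : ℝ), 0 < s → s ≤ 1 →
      F j (xseq k + s • dseq k) ≤ F j (xseq k) + s * tseq k
        - s * (σ/2) * ‖dseq k‖^2 + L * s^2 * ‖dseq k‖^2 := by
    intro k j s hs0 hs1
    have h1 : f j (xseq k + s • dseq k) ≤ f j (xseq k)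
        + s * ⟪gradient (f j) (xseq k), dseq k⟫ + L * s^2 * ‖dseq k‖^2 :=
      descent' (hfC2 j) hL (hLip j) (xseq k) (dseq k) hs0
    have h2 : g j (xseq k + s • dseq k) ≤ s * g j (xseq k + dseq k) + (1 - s) * g j (xseq k) := by
      have hb : (0:ℝ) ≤ 1 - s := by linarith
      have hab : s + (1 - s) = 1 := by ring
      have h := (hgconv j).2 (Set.mem_univ (xseq k + dseq k)) (Set.mem_univ (xseq k)) hs0.le hb hab
      have he : s • (xseq k + dseq k) + (1 - s) • xseq k = xseq k + s • dseq k := by module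
      rw [he] at h
      simpa [smul_eq_mul] using h
    have h3 : ⟪gradient (f j) (xseq k), dseq k⟫ + (g j (xseq k + dseq k) - g j (xseq k))
        = Qj f g j (xseq k) (dseq k)
          - (1/2) * ⟪(fderiv ℝ (gradient (f j)) (xseq k)) (dseq k), dseq k⟫ := by
      simp only [Qj]; ring
    have h4 : Qj f g j (xseq k) (dseq k) ≤ tseq k := by
      rw [ht k, Qmax]
      exact Finset.le_sup' (fun j => Qj f g j (xseq k) (dseq k)) (Finset.mem_univ j)
    have h5 : σ * ‖dseq k‖^2 ≤ ⟪(fderiv ℝ (gradient (f j)) (xseq k)) (dseq k), dseq k⟫ :=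
      hess_lower' (hfC2 j) (hfsc j) (xseq k) (dseq k)
    rw [hF j, hF j]
    nlinarith [h1, h2, h3, mul_le_mul_of_nonneg_left h4 hs0.le,
      mul_le_mul_of_nonneg_left h5 hs0.le]
  -- step size lower bound
  set c : ℝ := min 1 (r * (σ * (2 - β) / (2 * L))) with hcdef
  have hc : 0 < c := by
    apply lt_min one_pos
    apply mul_pos hr0
    apply div_pos (by nlinarith) (by linarith)
  have halow : ∀ k, dseq k ≠ 0 → c ≤ alphaseq k := by
    intro k hd
    obtain ⟨N, hN, hA, hfail⟩ := halpha k
    match N with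
    | 0 => rw [hN, pow_zero]; exact min_le_left _ _
    | (N' + 1) =>
      have hs0 : (0:ℝ) < r ^ N' := pow_pos hr0 _
      have hs1 : r ^ N' ≤ 1 := pow_le_one₀ hr0.le hr1.le
      have hfj := hfail N' (Nat.lt_succ_self _)
      push_neg at hfj
      obtain ⟨j, hj⟩ := hfj
      have hdc := hdesc k j (r ^ N') hs0 hs1
      have hD : 0 < ‖dseq k‖^2 := by
        have := norm_pos_iff.2 hd
        positivity
      have htn := htneg k
      have h6 : β * tseq k < tseq k - σ/2 * ‖dseq k‖^2 + L * (r ^ N') * ‖dseq k‖^2 := by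
        have h7 : (r ^ N') * (β * tseq k) < (r ^ N') * (tseq k - σ/2 * ‖dseq k‖^2
            + L * (r ^ N') * ‖dseq k‖^2) := by nlinarith [hj, hdc]
        exact lt_of_mul_lt_mul_left h7 hs0.le
      have hgt : σ * (2 - β) / (2 * L) < r ^ N' := by
        rw [div_lt_iff₀ (by linarith)]
        nlinarith [h6, mul_le_mul_of_nonneg_left htn (by linarith : (0:ℝ) ≤ 1 - β), hD]
      calc c ≤ r * (σ * (2 - β) / (2 * L)) := min_le_right _ _
        _ ≤ r * r ^ N' := by nlinarith [hgt, hr0]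
        _ = alphaseq k := by rw [hN, pow_succ]; ring
  -- Armijo and monotonicity
  have harmijo : ∀ k (j : Fin (m+1)), F j (xseq (k+1)) ≤ F j (xseq k) + β * alphaseq k * tseq k := by
    intro k j
    obtain ⟨N, _, hA, _⟩ := halpha k
    rw [hupd k]; exact hA j
  have hapos : ∀ k, 0 < alphaseq k := by
    intro k; obtain ⟨N, hN, _, _⟩ := halpha k
    rw [hN]; exact pow_pos hr0 N
  have hbat : ∀ k, β * alphaseq k * tseq k ≤ 0 := by
    intro k
    exact mul_nonpos_of_nonneg_of_nonpos (mul_nonneg hβ0.le (hapos k).le) (htle k)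
  set a : ℕ → ℝ := fun k => F 0 (xseq k) with hadef
  have hAnti : Antitone a := by
    apply antitone_nat_of_succ_le
    intro k
    have := harmijo k 0
    have := hbat k
    simp only [hadef]
    linarith
  have haφ : Tendsto (a ∘ φ) atTop (nhds (F 0 xstar)) := ((hFc 0).tendsto xstar).comp hφlim
  have hlb : ∀ k, F 0 xstar ≤ a k := by
    intro k
    refine le_of_tendsto haφ ?_
    filter_upwards [eventually_ge_atTop k] with l hl
    exact hAnti (hl.trans (hφmono.le_apply))
  have hbdd : BddBelow (Set.range a) := ⟨F 0 xstar, by rintro y ⟨k, rfl⟩; exact hlb k⟩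
  have hconv : Tendsto a atTop (nhds (⨅ k, a k)) := tendsto_atTop_ciInf hAnti hbdd
  have heqA : (⨅ k, a k) = F 0 xstar :=
    tendsto_nhds_unique (hconv.comp hφmono.tendsto_atTop) haφ
  have haconv : Tendsto a atTop (nhds (F 0 xstar)) := heqA ▸ hconv
  have hdiff0 : Tendsto (fun k => a (k+1) - a k) atTop (nhds 0) := by
    have h := (haconv.comp (tendsto_add_atTop_nat 1)).sub haconv
    simpa using h
  have hbt0 : Tendsto (fun k => β * alphaseq k * tseq k) atTop (nhds 0) := by
    refine tendsto_of_tendsto_of_tendsto_of_le_of_le hdiff0 tendsto_const_nhds ?_ hbat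
    intro k
    have := harmijo k 0
    simp only [hadef]
    linarith
  have hat0 : Tendsto (fun k => alphaseq k * tseq k) atTop (nhds 0) := by
    have h := hbt0.const_mul β⁻¹
    rw [mul_zero] at h
    refine h.congr fun k => ?_
    field_simp
  -- t_k → 0
  have ht0 : Tendsto tseq atTop (nhds 0) := by
    have hlow : ∀ k, (alphaseq k * tseq k) / c ≤ tseq k := by
      intro k
      by_cases hd : dseq k = 0
      · have hz : tseq k = 0 := by rw [ht k, hd, hQ0]
        simp [hz]
      · have h1 : alphaseq k * tseq k ≤ c * tseq k :=
          mul_le_mul_of_nonpos_right (halow k hd) (htle k)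
        rw [div_le_iff₀ hc]
        linarith [h1]
    have hupper : Tendsto (fun k => (alphaseq k * tseq k) / c) atTop (nhds 0) := by
      have h := hat0.div_const c
      simpa using h
    exact tendsto_of_tendsto_of_tendsto_of_le_of_le hupper tendsto_const_nhds hlow htle
  -- Q(x*, d') ≥ 0 for all d'
  have hQstar : ∀ d' : EuclideanSpace ℝ (Fin n), 0 ≤ Qmax f g xstar d' := by
    intro d'
    have h1 : ∀ l, tseq (φ l) ≤ Qmax f g (xseq (φ l)) d' := by
      intro l
      rw [ht (φ l)]
      exact hdmin (φ l) d'
    have hQjcont : ∀ j : Fin (m+1), Continuous (fun x => Qj f g j x d') := by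
      intro j
      have hgrad : Continuous (gradient (f j)) := (gradC1 (hfC2 j)).continuous
      have hfd2 : Continuous (fun x => fderiv ℝ (gradient (f j)) x) :=
        (gradC1 (hfC2 j)).continuous_fderiv (by norm_num)
      have hc1 : Continuous (fun x => ⟪gradient (f j) x, d'⟫) :=
        hgrad.inner continuous_const
      have hc2 : Continuous (fun x => ⟪(fderiv ℝ (gradient (f j)) x) d', d'⟫) :=
        (hfd2.clm_apply continuous_const).inner continuous_const
      have hc3 : Continuous (fun x : EuclideanSpace ℝ (Fin n) => g j (x + d')) :=
        (hgcont j).comp (continuous_id.add continuous_const)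
      simp only [Qj]
      exact ((hc1.add (continuous_const.mul hc2)).add hc3).sub (hgcont j)
    have h2 : Tendsto (fun l => Qmax f g (xseq (φ l)) d') atTop (nhds (Qmax f g xstar d')) := by
      simp only [Qmax]
      exact tendsto_finset_sup'' _ _ (fun j l => Qj f g j (xseq (φ l)) d')
        (fun j => Qj f g j xstar d')
        (fun j _ => ((hQjcont j).tendsto xstar).comp hφlim)
    exact le_of_tendsto_of_tendsto (ht0.comp hφmono.tendsto_atTop) h2 (Eventually.of_forall h1)
  -- final limit
  intro d
  have hsup : Tendsto (fun s : ℝ => Finset.univ.sup' Finset.univ_nonempty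
      (fun j => Qj f g j xstar (s • d) / s)) (nhdsWithin 0 (Set.Ioi 0))
      (nhds (Finset.univ.sup' Finset.univ_nonempty (fun j => F' xstar j d))) := by
    refine tendsto_finset_sup'' _ _ _ _ (fun j _ => ?_)
    have hgq : Tendsto (fun s : ℝ => (g j (xstar + s • d) - g j xstar) / s)
        (nhdsWithin 0 (Set.Ioi 0)) (nhds (F' xstar j d - ⟪gradient (f j) xstar, d⟫)) := by
      have hFq := hF' xstar j d
      rw [HasDirDeriv] at hFq
      have hfq := slope_tendsto' (hfd j) xstar d
      refine Tendsto.congr (fun s => ?_) (hFq.sub hfq)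
      rw [hF j, hF j, ← sub_div]
      congr 1
      ring
    have hB : ContinuousAt (fun s : ℝ => ⟪gradient (f j) xstar, d⟫
        + s * ((1/2) * ⟪(fderiv ℝ (gradient (f j)) xstar) d, d⟫)) 0 := by fun_prop
    have hlin : Tendsto (fun s : ℝ => ⟪gradient (f j) xstar, d⟫
        + s * ((1/2) * ⟪(fderiv ℝ (gradient (f j)) xstar) d, d⟫))
        (nhdsWithin 0 (Set.Ioi 0)) (nhds ⟪gradient (f j) xstar, d⟫) := by
      have h := (hB.continuousWithinAt (s := Set.Ioi (0:ℝ))).tendsto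
      simpa using h
    have hcomb := hlin.add hgq
    have heq : (fun s : ℝ => (⟪gradient (f j) xstar, d⟫
        + s * ((1/2) * ⟪(fderiv ℝ (gradient (f j)) xstar) d, d⟫))
        + (g j (xstar + s • d) - g j xstar) / s)
        =ᶠ[nhdsWithin 0 (Set.Ioi 0)] (fun s => Qj f g j xstar (s • d) / s) := by
      filter_upwards [self_mem_nhdsWithin] with s hs
      have hs0 : (s:ℝ) ≠ 0 := ne_of_gt hs
      have e1 : ⟪gradient (f j) xstar, s • d⟫ = s * ⟪gradient (f j) xstar, d⟫ :=
        real_inner_smul_right _ _ _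
      have e2 : ⟪(fderiv ℝ (gradient (f j)) xstar) (s • d), s • d⟫
          = s^2 * ⟪(fderiv ℝ (gradient (f j)) xstar) d, d⟫ := by
        rw [map_smul, real_inner_smul_left, real_inner_smul_right]; ring
      simp only [Qj, e1, e2]
      field_simp
      ring
    have hval : ⟪gradient (f j) xstar, d⟫ + (F' xstar j d - ⟪gradient (f j) xstar, d⟫)
        = F' xstar j d := by ring
    rw [hval] at hcomb
    exact Tendsto.congr' heq hcomb
  refine ge_of_tendsto hsup ?_
  filter_upwards [self_mem_nhdsWithin] with s hs
  have h0 := hQstar (s • d)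
  rw [Qmax, Finset.le_sup'_iff] at h0
  obtain ⟨j, hjm, hj⟩ := h0
  rw [Finset.le_sup'_iff]
  exact ⟨j, hjm, div_nonneg hj (le_of_lt hs)⟩
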